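/- Theorem 2 (matrix form, uniqueness of maximizer): let ε > 0 and let a* be the embedding factor. If (μs, Σs) is feasible and Real.log (det Σs) = n · Real.log a* + Real.log (det Σc), then μs = μc and Σs = a* • Σc. -/

import Mathlib

open Matrix
open scoped MatrixOrder

/-- The (forward) Gaussian KL expression. -/
noncomputable def klGauss {n : ℕ} (Sc : Matrix (Fin n) (Fin n) ℝ) (μc : Fin n → ℝ)
    (Ss : Matrix (Fin n) (Fin n) ℝ) (μs : Fin n → ℝ) : ℝ :=
  (1 / 2) * ((Sc⁻¹ * Ss).trace + (μc - μs) ⬝ᵥ (Sc⁻¹ *ᵥ (μc - μs))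
    + Real.log (Sc.det / Ss.det) - n)

/-- Conjugating a positive definite matrix by an invertible Hermitian matrix. -/
lemma posDef_conj_aux {m : ℕ} {A B : Matrix (Fin m) (Fin m) ℝ} (hA : A.PosDef)
    (hB : B.IsHermitian) (hBu : IsUnit B) : (B * A * B).PosDef := by
  rw [Matrix.posDef_iff_dotProduct_mulVec]
  constructor
  · have := Matrix.isHermitian_conjTranspose_mul_mul B hA.1
    rwa [hB.eq] at this
  · intro x hx
    have hBx : B *ᵥ x ≠ 0 := by
      intro h
      exact hx (Matrix.mulVec_injective_iff_isUnit.mpr hBu (by simpa using h))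
    have hpos := hA.dotProduct_mulVec_pos hBx
    have hrw : star x ⬝ᵥ ((B * A * B) *ᵥ x) = star (B *ᵥ x) ⬝ᵥ (A *ᵥ (B *ᵥ x)) := by
      simp only [star_trivial, ← Matrix.mulVec_mulVec]
      have hBT : Bᵀ = B := by simpa using hB.eq
      rw [Matrix.dotProduct_mulVec x B, ← Matrix.mulVec_transpose, hBT]
    rwa [hrw]

lemma log_eq_sub_one_iff_one {x : ℝ} (hx : 0 < x) (h : Real.log x = x - 1) : x = 1 := by
  by_contra hne
  exact absurd h (ne_of_lt (Real.log_lt_sub_one_of_pos hx hne))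

set_option maxHeartbeats 1000000 in
/-- Theorem 2 (matrix form, uniqueness of maximizer): a feasible pair attaining
the greatest value `n · log a* + log det Σc` must be `μs = μc`, `Σs = a* • Σc`. -/
theorem klGauss_max_logdet_unique {n : ℕ} (hn : 1 ≤ n)
    (Sc : Matrix (Fin n) (Fin n) ℝ) (hSc : Sc.PosDef) (μc : Fin n → ℝ)
    (ε : ℝ) (hε : 0 < ε)
    (astar : ℝ) (hastar1 : 1 ≤ astar)
    (hastar : astar - Real.log astar - 1 = 4 * ε ^ 2 / n)
    (μs : Fin n → ℝ) (Ss : Matrix (Fin n) (Fin n) ℝ) (hSs : Ss.PosDef)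
    (hfeas : klGauss Sc μc Ss μs ≤ 2 * ε ^ 2)
    (hmax : Real.log Ss.det = (n : ℝ) * Real.log astar + Real.log Sc.det) :
    μs = μc ∧ Ss = astar • Sc := by
  have ha : (0:ℝ) < astar := lt_of_lt_of_le one_pos hastar1
  have hnR : (0:ℝ) < n := by exact_mod_cast hn
  have hdc : (0:ℝ) < Sc.det := hSc.det_pos
  have hds : (0:ℝ) < Ss.det := hSs.det_pos
  -- square root of Sc
  set R : Matrix (Fin n) (Fin n) ℝ := CFC.sqrt Sc with hRdef
  have hRR : R * R = Sc := CFC.sqrt_mul_sqrt_self Sc (Matrix.nonneg_iff_posSemidef.mpr hSc.posSemidef)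
  have hRherm : R.IsHermitian := (Matrix.nonneg_iff_posSemidef.mp (CFC.sqrt_nonneg Sc)).1
  have hdet2 : R.det * R.det = Sc.det := by rw [← Matrix.det_mul, hRR]
  have hRdet : IsUnit R.det := by
    have hne : R.det ≠ 0 := by
      intro h; rw [h, mul_zero] at hdet2; exact hdc.ne (by linarith)
    exact hne.isUnit
  have hRu : IsUnit R := (Matrix.isUnit_iff_isUnit_det R).mpr hRdet
  have hRinv_herm : R⁻¹.IsHermitian := hRherm.inv
  have hRinv_u : IsUnit R⁻¹ := (Matrix.isUnit_nonsing_inv_iff).mpr hRu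
  -- the conjugated matrix
  set M : Matrix (Fin n) (Fin n) ℝ := R⁻¹ * Ss * R⁻¹ with hMdef
  have hM : M.PosDef := posDef_conj_aux hSs hRinv_herm hRinv_u
  -- Sc⁻¹ = R⁻¹ * R⁻¹
  have hScinv : Sc⁻¹ = R⁻¹ * R⁻¹ := by rw [← hRR, Matrix.mul_inv_rev]
  -- trace identity
  have htrace : (Sc⁻¹ * Ss).trace = M.trace := by
    rw [hScinv, hMdef]
    exact (Matrix.trace_mul_cycle R⁻¹ Ss R⁻¹).symm
  -- det identity
  have hRinv_det_eq : R⁻¹.det = R.det⁻¹ := by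
    rw [Matrix.det_nonsing_inv, Ring.inverse_eq_inv]
  have hdetM : M.det = Ss.det / Sc.det := by
    rw [hMdef, Matrix.det_mul, Matrix.det_mul, hRinv_det_eq, ← hdet2]
    field_simp
  have hdetMpos : (0:ℝ) < M.det := hdetM ▸ div_pos hds hdc
  -- eigenvalues of M
  set lam : Fin n → ℝ := hM.1.eigenvalues with hlamdef
  have hlampos : ∀ i, 0 < lam i := hM.eigenvalues_pos
  -- trace M = ∑ eigenvalues
  have htrM : M.trace = ∑ i, lam i := by
    conv_lhs => rw [hM.1.spectral_theorem]
    rw [Unitary.conjStarAlgAut_apply, Matrix.trace_mul_cycle]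
    have hUU : (star (hM.1.eigenvectorUnitary : Matrix (Fin n) (Fin n) ℝ)) *
        (hM.1.eigenvectorUnitary : Matrix (Fin n) (Fin n) ℝ) = 1 := by
      simpa using hM.1.eigenvectorUnitary.2.1
    rw [hUU, Matrix.one_mul, Matrix.trace_diagonal]
    simp
    rfl
  -- det M = ∏ eigenvalues
  have hdetMprod : M.det = ∏ i, lam i := by
    simpa using hM.1.det_eq_prod_eigenvalues
  -- sum of logs of eigenvalues
  have hsumlog : ∑ i, Real.log (lam i) = (n : ℝ) * Real.log astar := by
    rw [← Real.log_prod (fun i _ => (hlampos i).ne'), ← hdetMprod, hdetM,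
      Real.log_div hds.ne' hdc.ne', hmax]
    ring
  -- feasibility rearranged
  have h4 : 4 * ε ^ 2 = (n : ℝ) * (astar - Real.log astar - 1) := by
    rw [hastar]; field_simp
  have hlogdiv : Real.log (Sc.det / Ss.det) = -((n : ℝ) * Real.log astar) := by
    rw [Real.log_div hdc.ne' hds.ne', hmax]; ring
  set q : ℝ := (μc - μs) ⬝ᵥ (Sc⁻¹ *ᵥ (μc - μs)) with hqdef
  have hqnonneg : 0 ≤ q := by
    simpa [hqdef] using hSc.inv.posSemidef.dotProduct_mulVec_nonneg (μc - μs)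
  have hkey : M.trace + q ≤ (n : ℝ) * astar := by
    have h2 : (Sc⁻¹ * Ss).trace + q + Real.log (Sc.det / Ss.det) - n ≤ 4 * ε ^ 2 := by
      have := hfeas
      unfold klGauss at this
      linarith
    rw [htrace, hlogdiv, h4] at h2
    have hnlog : (n:ℝ) * (astar - Real.log astar - 1)
        = (n:ℝ) * astar - (n:ℝ) * Real.log astar - n := by ring
    linarith [hnlog ▸ h2]
  have htr_le : M.trace ≤ (n : ℝ) * astar := by linarith
  -- pointwise nonnegative terms
  set g : Fin n → ℝ := fun i => lam i - astar - astar * Real.log (lam i / astar) with hgdef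
  have hgnonneg : ∀ i, 0 ≤ g i := by
    intro i
    have hpos : 0 < lam i / astar := div_pos (hlampos i) ha
    have := Real.log_le_sub_one_of_pos hpos
    have h' : astar * Real.log (lam i / astar) ≤ astar * (lam i / astar - 1) :=
      mul_le_mul_of_nonneg_left this ha.le
    have : astar * (lam i / astar - 1) = lam i - astar := by field_simp
    simp only [hgdef]
    linarith
  have hgsum : ∑ i, g i = M.trace - (n : ℝ) * astar := by
    simp only [hgdef]
    rw [Finset.sum_sub_distrib, Finset.sum_sub_distrib, ← Finset.mul_sum]
    have hlogdivsum : ∑ i, Real.log (lam i / astar) = 0 := by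
      have : ∀ i, Real.log (lam i / astar) = Real.log (lam i) - Real.log astar := fun i =>
        Real.log_div (hlampos i).ne' ha.ne'
      simp only [this, Finset.sum_sub_distrib, hsumlog]
      simp
    rw [hlogdivsum, htrM]
    simp [Finset.sum_const, nsmul_eq_mul]
  have hgzero : ∀ i, g i = 0 := by
    have hsum0 : ∑ i, g i = 0 := le_antisymm (by rw [hgsum]; linarith) (Finset.sum_nonneg fun i _ => hgnonneg i)
    intro i
    exact (Finset.sum_eq_zero_iff_of_nonneg (fun i _ => hgnonneg i)).mp hsum0 i (Finset.mem_univ i)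
  have hlam_eq : ∀ i, lam i = astar := by
    intro i
    have h0 := hgzero i
    simp only [hgdef] at h0
    have hpos : 0 < lam i / astar := div_pos (hlampos i) ha
    have h2 : astar * Real.log (lam i / astar) = astar * (lam i / astar - 1) := by
      rw [mul_sub, mul_one, mul_div_cancel₀ _ ha.ne']
      linarith
    have hlog := mul_left_cancel₀ ha.ne' h2
    have h1 := log_eq_sub_one_iff_one hpos hlog
    have := (div_eq_one_iff_eq ha.ne').mp h1
    exact this
  -- q = 0 hence μs = μc
  have htrM_eq : M.trace = (n : ℝ) * astar := by
    rw [htrM]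
    simp only [hlam_eq]
    simp [Finset.sum_const, nsmul_eq_mul]
  have hq0 : q = 0 := le_antisymm (by linarith) hqnonneg
  have hμ : μc - μs = 0 := by
    by_contra hne
    have hq_pos : 0 < q := by simpa [hqdef] using hSc.inv.dotProduct_mulVec_pos hne
    exact absurd hq0 hq_pos.ne'
  have hμeq : μs = μc := by
    have := sub_eq_zero.mp hμ
    exact this.symm
  -- M = astar • 1
  have hMform : M = astar • (1 : Matrix (Fin n) (Fin n) ℝ) := by
    have hdiag : Matrix.diagonal (RCLike.ofReal ∘ lam : Fin n → ℝ)
        = astar • (1 : Matrix (Fin n) (Fin n) ℝ) := by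
      have hfun : (RCLike.ofReal ∘ lam : Fin n → ℝ) = fun _ => astar := by
        funext i; simp [hlam_eq i]
      rw [Matrix.smul_one_eq_diagonal, hfun]
    have hUU' : (hM.1.eigenvectorUnitary : Matrix (Fin n) (Fin n) ℝ) *
        (star (hM.1.eigenvectorUnitary : Matrix (Fin n) (Fin n) ℝ)) = 1 := by
      simpa using hM.1.eigenvectorUnitary.2.2
    calc M = (hM.1.eigenvectorUnitary : Matrix (Fin n) (Fin n) ℝ) *
        Matrix.diagonal (RCLike.ofReal ∘ lam) *
        (star (hM.1.eigenvectorUnitary : Matrix (Fin n) (Fin n) ℝ)) := hM.1.spectral_theorem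
      _ = astar • (1 : Matrix (Fin n) (Fin n) ℝ) := by
          rw [hdiag, Matrix.mul_smul, Matrix.mul_one, Matrix.smul_mul, hUU']
  -- recover Ss
  have hSsform : Ss = astar • Sc := by
    have hRM : R * M * R = Ss := by
      rw [hMdef, ← Matrix.mul_assoc, ← Matrix.mul_assoc,
        Matrix.mul_nonsing_inv _ hRdet, Matrix.one_mul,
        Matrix.mul_assoc, Matrix.nonsing_inv_mul _ hRdet, Matrix.mul_one]
    rw [← hRM, hMform, Matrix.mul_smul, Matrix.mul_one, Matrix.smul_mul, hRR]
  exact ⟨hμeq, hSsform⟩
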